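/- Let ⪯ be any well-order of ℚ of order type ω (for instance induced by an enumeration x₀, x₁, … of ℚ). Colour each pair a < b of rationals red if a ⪯ b and blue if b ⪯ a. Then every X ⊆ ℚ that is order-isomorphic to (ℚ, ≤) contains both a red pair and a blue pair. -/
import Mathlib

lemma infinite_above (X : Set ℚ) (e : ↥X ≃o ℚ) (x : ↥X) :
    {y : ℚ | y ∈ X ∧ (x : ℚ) < y}.Infinite := by
  have hf : Function.Injective (fun n : ℕ => ((e.symm (e x + n + 1) : ↥X) : ℚ)) := by
    intro m n h
    have h2 := e.symm.injective (Subtype.ext h)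
    have : (m : ℚ) = n := by linarith
    exact_mod_cast this
  apply Set.infinite_of_injective_forall_mem hf
  intro n
  refine ⟨(e.symm (e x + n + 1)).2, ?_⟩
  have : x < e.symm (e x + n + 1) := by
    rw [← e.lt_iff_lt]
    simp
    have : (0:ℚ) ≤ n := Nat.cast_nonneg n
    linarith
  exact_mod_cast this

lemma infinite_below (X : Set ℚ) (e : ↥X ≃o ℚ) (x : ↥X) :
    {y : ℚ | y ∈ X ∧ y < (x : ℚ)}.Infinite := by
  have hf : Function.Injective (fun n : ℕ => ((e.symm (e x - n - 1) : ↥X) : ℚ)) := by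
    intro m n h
    have h2 := e.symm.injective (Subtype.ext h)
    have : (m : ℚ) = n := by linarith
    exact_mod_cast this
  apply Set.infinite_of_injective_forall_mem hf
  intro n
  refine ⟨(e.symm (e x - n - 1)).2, ?_⟩
  have : e.symm (e x - n - 1) < x := by
    rw [← e.lt_iff_lt]
    simp
    have : (0:ℚ) ≤ n := Nat.cast_nonneg n
    linarith
  exact_mod_cast this

theorem red_and_blue_pairs_in_every_copy (pre : ℚ → ℚ → Prop)
    (hlin : IsLinearOrder ℚ pre) (homega : ∀ x : ℚ, {y : ℚ | pre y x}.Finite)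
    (X : Set ℚ) (hX : Nonempty (↥X ≃o ℚ)) :
    (∃ a ∈ X, ∃ b ∈ X, a < b ∧ pre a b) ∧
    (∃ a ∈ X, ∃ b ∈ X, a < b ∧ pre b a) := by
  obtain ⟨e⟩ := hX
  set x : ↥X := e.symm 0 with hx
  constructor
  · -- red: a = x, need b > x with pre x b
    have hinf := (infinite_above X e x).diff (homega x)
    obtain ⟨b, ⟨⟨hbX, hxb⟩, hnb⟩⟩ := hinf.nonempty
    refine ⟨x, x.2, b, hbX, hxb, ?_⟩
    rcases hlin.total (x : ℚ) b with h | h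
    · exact h
    · exact absurd h hnb
  · -- blue: b = x, need a < x with pre x a
    have hinf := (infinite_below X e x).diff (homega x)
    obtain ⟨a, ⟨⟨haX, hax⟩, hna⟩⟩ := hinf.nonempty
    refine ⟨a, haX, x, x.2, hax, ?_⟩
    rcases hlin.total (x : ℚ) a with h | h
    · exact h
    · exact absurd h hna
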